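/- For integers k ≥ 0 and n ≥ l ≥ k+1, the number op_{n,≥k,≤l} of ordered preference sets (a_1,…,a_n) of length n with at least k flaws satisfying a_i ≤ l for all i equals C(n+l−1, l−k−1). -/

import Mathlib

/-- The first unoccupied parking space `j` with `p ≤ j ≤ n`, if any. -/
def firstFree (n : ℕ) (occ : Finset ℕ) (p : ℕ) : Option ℕ :=
  (List.range' p (n + 1 - p)).find? (fun j => decide (j ∉ occ))

/-- Number of cars that fail to park, processing the preference list in order,
given the set of already occupied spaces. -/
def flawsFrom (n : ℕ) : List ℕ → Finset ℕ → ℕ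
  | [], _ => 0
  | p :: rest, occ =>
    match firstFree n occ p with
    | none => flawsFrom n rest occ + 1
    | some j => flawsFrom n rest (insert j occ)

/-- The number of flaws (unparked cars) of a preference list of length `n`. -/
def flaws (n : ℕ) (a : List ℕ) : ℕ := flawsFrom n a ∅

/-- A preference set of length `n`: a list of length `n` with entries in `{1, …, n}`. -/
def IsPrefSet (n : ℕ) (a : List ℕ) : Prop :=
  a.length = n ∧ ∀ x ∈ a, 1 ≤ x ∧ x ≤ n

/-- An ordered preference set of length `n`: a nondecreasing preference set. -/
def IsOrderedPrefSet (n : ℕ) (a : List ℕ) : Prop :=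
  IsPrefSet n a ∧ a.Pairwise (· ≤ ·)

/-- `op_{n,≥k}`: number of ordered preference sets of length `n` with at least `k` flaws. -/
noncomputable def opGe (n k : ℕ) : ℕ :=
  {a : List ℕ | IsOrderedPrefSet n a ∧ k ≤ flaws n a}.ncard

/-- `op_{n,≤k}`: number of ordered preference sets of length `n` with at most `k` flaws. -/
noncomputable def opLe (n k : ℕ) : ℕ :=
  {a : List ℕ | IsOrderedPrefSet n a ∧ flaws n a ≤ k}.ncard

/-- `op_{n,k}`: number of ordered preference sets of length `n` with exactly `k` flaws. -/
noncomputable def opEq (n k : ℕ) : ℕ :=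
  {a : List ℕ | IsOrderedPrefSet n a ∧ flaws n a = k}.ncard

/-- `op_{n,≥k,≤l}`: at least `k` flaws, every entry at most `l`. -/
noncomputable def opGeLe (n k l : ℕ) : ℕ :=
  {a : List ℕ | IsOrderedPrefSet n a ∧ k ≤ flaws n a ∧ ∀ x ∈ a, x ≤ l}.ncard

/-- `op_{n,≥k,≤l}^m`: at least `k` flaws, every entry at most `l`, leading term `m`. -/
noncomputable def opGeLeLead (n k l m : ℕ) : ℕ :=
  {a : List ℕ | IsOrderedPrefSet n a ∧ k ≤ flaws n a ∧ (∀ x ∈ a, x ≤ l) ∧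
    a.head? = some m}.ncard

/-- `op_{n,k,≤l}^m`: exactly `k` flaws, every entry at most `l`, leading term `m`. -/
noncomputable def opEqLeLead (n k l m : ℕ) : ℕ :=
  {a : List ℕ | IsOrderedPrefSet n a ∧ flaws n a = k ∧ (∀ x ∈ a, x ≤ l) ∧
    a.head? = some m}.ncard

/-- `op_{n,k}^m`: exactly `k` flaws, leading term `m`. -/
noncomputable def opLead (n k m : ℕ) : ℕ :=
  {a : List ℕ | IsOrderedPrefSet n a ∧ flaws n a = k ∧ a.head? = some m}.ncard

/-- `op_{n,k,=l}^m`: exactly `k` flaws, maximal entry exactly `l`, leading term `m`. -/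
noncomputable def opMaxLead (n k l m : ℕ) : ℕ :=
  {a : List ℕ | IsOrderedPrefSet n a ∧ flaws n a = k ∧ (∀ x ∈ a, x ≤ l) ∧ l ∈ a ∧
    a.head? = some m}.ncard

/-- Binomial coefficient `C(a, b)` with an integer lower index, which is `0`
when `b < 0` (the standard convention). -/
def chooseInt (a : ℕ) (b : ℤ) : ℕ := if 0 ≤ b then a.choose b.toNat else 0

/-- Simplified parking process for sorted lists: `r` is the last parked position. -/
def g (n : ℕ) : ℕ → List ℕ → ℕ
  | _, [] => 0
  | r, p :: L => if max (r+1) p ≤ n then g n (max (r+1) p) L else g n r L + 1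

lemma find?_range'_eq (P : ℕ → Bool) (t : ℕ) :
    ∀ (m p : ℕ), (∀ j, p ≤ j → j < p + m → (P j = true ↔ t ≤ j)) →
    (List.range' p m).find? P = if max t p < p + m then some (max t p) else none := by
  intro m
  induction m with
  | zero =>
    intro p h
    simp [List.range']
  | succ m ih =>
    intro p h
    rw [List.range'_succ, List.find?_cons]
    by_cases hp : P p = true
    · have ht : t ≤ p := (h p le_rfl (by omega)).1 hp
      rw [hp]
      have : max t p = p := by omega
      rw [this, if_pos (by omega)]
    · have ht : p < t := by
        by_contra hc
        exact hp ((h p le_rfl (by omega)).2 (by omega))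
      simp only [hp]
      rw [ih (p+1) (fun j h1 h2 => h j (by omega) (by omega))]
      have h1 : max t (p+1) = max t p := by omega
      have h2 : p + 1 + m = p + (m+1) := by omega
      rw [h1, h2]

lemma firstFree_spec (n r p : ℕ) (occ : Finset ℕ) (hp : p ≤ n)
    (h : ∀ j, p ≤ j → (j ∈ occ ↔ j ≤ r)) :
    firstFree n occ p = if max (r+1) p ≤ n then some (max (r+1) p) else none := by
  unfold firstFree
  rw [find?_range'_eq (fun j => decide (j ∉ occ)) (r+1) (n+1-p) p]
  · have : p + (n + 1 - p) = n + 1 := by omega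
    rw [this]
    by_cases hc : max (r+1) p ≤ n
    · rw [if_pos (by omega : max (r+1) p < n + 1), if_pos hc]
    · rw [if_neg (by omega : ¬ max (r+1) p < n + 1), if_neg hc]
  · intro j h1 h2
    simp only [decide_eq_true_eq]
    rw [h j h1]
    omega

lemma flawsFrom_eq_g (n : ℕ) :
    ∀ (L : List ℕ) (occ : Finset ℕ) (q r : ℕ), L.Pairwise (· ≤ ·) →
    (∀ x ∈ L, x ≤ n) → r ≤ n → (∀ x ∈ L, q ≤ x) →
    (∀ j, q ≤ j → (j ∈ occ ↔ j ≤ r)) →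
    flawsFrom n L occ = g n r L := by
  intro L
  induction L with
  | nil => intro occ q r _ _ _ _ _; rfl
  | cons p L ih =>
    intro occ q r hsort hle hr hq hocc
    have hsort' := List.pairwise_cons.mp hsort
    have hpn : p ≤ n := hle p (by simp)
    have hqp : q ≤ p := hq p (by simp)
    have hocc' : ∀ j, p ≤ j → (j ∈ occ ↔ j ≤ r) := fun j hj => hocc j (le_trans hqp hj)
    rw [show flawsFrom n (p :: L) occ = match firstFree n occ p with
      | none => flawsFrom n L occ + 1
      | some j => flawsFrom n L (insert j occ) from rfl]
    rw [firstFree_spec n r p occ hpn hocc']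
    by_cases hcase : max (r+1) p ≤ n
    · rw [if_pos hcase]
      simp only []
      rw [ih (insert (max (r+1) p) occ) p (max (r+1) p) hsort'.2
        (fun x hx => hle x (by simp [hx])) hcase hsort'.1 ?_]
      · rw [show g n r (p :: L) = if max (r+1) p ≤ n then g n (max (r+1) p) L
          else g n r L + 1 from rfl, if_pos hcase]
      · intro j hj
        simp only [Finset.mem_insert]
        rw [hocc' j hj]
        omega
    · rw [if_neg hcase]
      simp only []
      rw [ih occ p r hsort'.2 (fun x hx => hle x (by simp [hx])) hr hsort'.1 hocc']
      rw [show g n r (p :: L) = if max (r+1) p ≤ n then g n (max (r+1) p) L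
        else g n r L + 1 from rfl, if_neg hcase]

lemma flaws_eq_g (n : ℕ) (a : List ℕ) (hsort : a.Pairwise (· ≤ ·))
    (hb : ∀ x ∈ a, 1 ≤ x ∧ x ≤ n) : flaws n a = g n 0 a := by
  apply flawsFrom_eq_g n a ∅ 1 0 hsort (fun x hx => (hb x hx).2) (by omega)
    (fun x hx => (hb x hx).1)
  intro j hj
  simp
  omega

lemma g_top (n : ℕ) : ∀ L : List ℕ, (∀ x ∈ L, x ≤ n) → g n n L = L.length := by
  intro L
  induction L with
  | nil => intro; rfl
  | cons p L ih =>
    intro hle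
    rw [show g n n (p :: L) = if max (n+1) p ≤ n then g n (max (n+1) p) L
      else g n n L + 1 from rfl, if_neg (by omega)]
    rw [ih (fun x hx => hle x (by simp [hx]))]
    simp

lemma g_iff (n k : ℕ) (hk : 1 ≤ k) :
    ∀ (L : List ℕ) (r : ℕ), L.Pairwise (· ≤ ·) → (∀ x ∈ L, x ≤ n) → r ≤ n →
    (k ≤ g n r L ↔ n + k ≤ L.length + r ∨
      ∃ i, ∃ h : i < L.length, n + k + i + 1 ≤ L.get ⟨i, h⟩ + L.length) := by
  intro L
  induction L with
  | nil =>
    intro r _ _ hr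
    simp [g]
    omega
  | cons p L ih =>
    intro r hsort hle hr
    have hsort' := List.pairwise_cons.mp hsort
    have hpn : p ≤ n := hle p (by simp)
    have hle' : ∀ x ∈ L, x ≤ n := fun x hx => hle x (by simp [hx])
    rw [show g n r (p :: L) = if max (r+1) p ≤ n then g n (max (r+1) p) L
      else g n r L + 1 from rfl]
    by_cases hcase : max (r+1) p ≤ n
    · rw [if_pos hcase]
      rw [ih (max (r+1) p) hsort'.2 hle' hcase]
      constructor
      · rintro (h1 | ⟨i, hi, h2⟩)
        · by_cases hp : n + k ≤ L.length + p
          · exact Or.inr ⟨0, by simp, by simp; omega⟩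
          · left; simp; omega
        · refine Or.inr ⟨i + 1, by simp; omega, ?_⟩
          rw [show ((p :: L).get ⟨i+1, by simp; omega⟩) = L.get ⟨i, hi⟩ from rfl]
          simp only [List.length_cons]
          omega
      · rintro (h1 | ⟨i, hi, h2⟩)
        · left; simp at h1 ⊢; omega
        · rcases i with _ | j
          · left
            rw [show ((p :: L).get ⟨0, hi⟩) = p from rfl] at h2
            simp only [List.length_cons] at h2 ⊢
            omega
          · right
            have hj : j < L.length := by simpa using hi
            refine ⟨j, hj, ?_⟩
            rw [show ((p :: L).get ⟨j+1, hi⟩) = L.get ⟨j, hj⟩ from rfl] at h2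
            simp only [List.length_cons] at h2
            omega
    · rw [if_neg hcase]
      have hrn : r = n := by omega
      rw [hrn, g_top n L hle']
      constructor
      · intro h1
        left
        simp
        omega
      · rintro (h1 | ⟨i, hi, h2⟩)
        · simp at h1; omega
        · have := hle _ ((p :: L).get_mem ⟨i, hi⟩)
          simp only [List.get_eq_getElem] at this h2
          simp only [List.length_cons] at h2 hi ⊢
          omega

lemma flaws_ge_iff (n k : ℕ) (hk : 1 ≤ k) (a : List ℕ) (hsort : a.Pairwise (· ≤ ·))
    (hlen : a.length = n) (hb : ∀ x ∈ a, 1 ≤ x ∧ x ≤ n) :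
    k ≤ flaws n a ↔ ∃ i, ∃ h : i < a.length, k + i + 1 ≤ a.get ⟨i, h⟩ := by
  rw [flaws_eq_g n a hsort hb, g_iff n k hk a 0 hsort (fun x hx => (hb x hx).2) (by omega)]
  constructor
  · rintro (h1 | ⟨i, hi, h2⟩)
    · omega
    · exact ⟨i, hi, by omega⟩
  · rintro ⟨i, hi, h2⟩
    exact Or.inr ⟨i, hi, by omega⟩

def Tset (n l : ℕ) : Set (List ℕ) :=
  {a | a.Pairwise (· ≤ ·) ∧ a.length = n ∧ ∀ x ∈ a, 1 ≤ x ∧ x ≤ l}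

def Sset (n k l : ℕ) : Set (List ℕ) :=
  {a | a.Pairwise (· ≤ ·) ∧ a.length = n ∧ (∀ x ∈ a, 1 ≤ x ∧ x ≤ l) ∧
    ∃ i, ∃ h : i < a.length, k + i + 1 ≤ a.get ⟨i, h⟩}

lemma chooseInt_succ (m : ℕ) (b : ℤ) :
    chooseInt (m+1) b = chooseInt m (b-1) + chooseInt m b := by
  unfold chooseInt
  rcases lt_trichotomy b 0 with h | h | h
  · rw [if_neg (by omega), if_neg (by omega), if_neg (by omega)]
  · subst h
    rw [if_pos le_rfl, if_neg (by omega), if_pos le_rfl]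
    simp
  · obtain ⟨j, rfl⟩ : ∃ j : ℕ, b = (j : ℤ) + 1 := ⟨(b - 1).toNat, by omega⟩
    rw [if_pos (by omega), if_pos (by omega), if_pos (by omega)]
    have h1 : ((j : ℤ) + 1).toNat = j + 1 := by omega
    have h2 : ((j : ℤ) + 1 - 1).toNat = j := by omega
    rw [h1, h2, Nat.choose_succ_succ]

lemma Tset_finite (n l : ℕ) : (Tset n l).Finite := by
  apply Set.Finite.subset ((List.finite_length_eq (Fin (l+1)) n).image (List.map Fin.val))
  rintro a ⟨_, hlen, hb⟩
  refine ⟨a.pmap (fun x h => (⟨x, h⟩ : Fin (l+1)))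
    (fun x hx => Nat.lt_succ_of_le (hb x hx).2), ?_, ?_⟩
  · simpa using hlen
  · rw [List.map_pmap]
    simp

lemma Sset_subset_Tset (n k l : ℕ) : Sset n k l ⊆ Tset n l :=
  fun _ ha => ⟨ha.1, ha.2.1, ha.2.2.1⟩

lemma Sset_finite (n k l : ℕ) : (Sset n k l).Finite :=
  (Tset_finite n l).subset (Sset_subset_Tset n k l)

lemma Tset_zero (l : ℕ) : Tset 0 l = {[]} := by
  ext a
  simp only [Tset, Set.mem_setOf_eq, Set.mem_singleton_iff]
  constructor
  · rintro ⟨_, hlen, _⟩; exact List.length_eq_zero_iff.mp hlen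
  · rintro rfl; exact ⟨List.Pairwise.nil, rfl, by simp⟩

lemma Tset_l0 (n : ℕ) (hn : n ≠ 0) : Tset n 0 = ∅ := by
  ext a
  simp only [Tset, Set.mem_setOf_eq, Set.mem_empty_iff_false, iff_false]
  rintro ⟨_, hlen, hb⟩
  rcases a with _ | ⟨h, t⟩
  · simp at hlen; omega
  · have := hb h (by simp); omega

lemma Sset_zero (k l : ℕ) : Sset 0 k l = ∅ := by
  ext a
  simp only [Sset, Set.mem_setOf_eq, Set.mem_empty_iff_false, iff_false]
  rintro ⟨_, hlen, _, i, hi, _⟩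
  omega

lemma Sset_l0 (n k : ℕ) : Sset n k 0 = ∅ := by
  ext a
  simp only [Sset, Set.mem_setOf_eq, Set.mem_empty_iff_false, iff_false]
  rintro ⟨_, _, hb, i, hi, _⟩
  have := hb _ (a.get_mem ⟨i, hi⟩)
  omega

lemma Sset_k0 (n l : ℕ) (hn : n ≠ 0) : Sset n 0 l = Tset n l := by
  ext a
  simp only [Sset, Tset, Set.mem_setOf_eq]
  constructor
  · rintro ⟨h1, h2, h3, _⟩; exact ⟨h1, h2, h3⟩
  · rintro ⟨h1, h2, h3⟩
    refine ⟨h1, h2, h3, 0, by omega, ?_⟩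
    have := h3 _ (a.get_mem ⟨0, by omega⟩)
    omega

lemma Tset_rec (n l : ℕ) :
    Tset (n+1) (l+1) =
      (fun t => 1 :: t) '' Tset n (l+1) ∪ (List.map (· + 1)) '' Tset (n+1) l := by
  ext a
  simp only [Set.mem_union, Set.mem_image]
  constructor
  · rintro ⟨hs, hlen, hb⟩
    rcases a with _ | ⟨h, t⟩
    · simp at hlen
    · have hs' := List.pairwise_cons.mp hs
      have hlen' : t.length = n := by simpa using hlen
      by_cases hh : h = 1
      · left
        exact ⟨t, ⟨hs'.2, hlen', fun x hx => hb x (by simp [hx])⟩, by rw [hh]⟩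
      · right
        have h2 : ∀ x ∈ h :: t, 2 ≤ x := by
          intro x hx
          rcases List.mem_cons.mp hx with rfl | hx
          · have := (hb x (by simp)).1; omega
          · have := hs'.1 x hx
            have := (hb h (by simp)).1
            omega
        refine ⟨(h :: t).map (· - 1), ⟨?_, ?_, ?_⟩, ?_⟩
        · exact List.Pairwise.map _ (fun a b hab => Nat.sub_le_sub_right hab 1) hs
        · simpa using hlen
        · intro x hx
          rcases List.mem_map.mp hx with ⟨y, hy, rfl⟩
          have := h2 y hy
          have := (hb y hy).2
          omega
        · rw [List.map_map]
          have he : ∀ x ∈ (h :: t), ((· + 1) ∘ (· - 1)) x = id x := by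
            intro x hx
            have := h2 x hx
            simp
            omega
          rw [List.map_congr_left he, List.map_id]
  · rintro (⟨t, ⟨hs, hlen, hb⟩, rfl⟩ | ⟨b, ⟨hs, hlen, hb⟩, rfl⟩)
    · refine ⟨List.pairwise_cons.mpr ⟨fun x hx => (hb x hx).1, hs⟩, by simp [hlen], ?_⟩
      intro x hx
      rcases List.mem_cons.mp hx with rfl | hx
      · omega
      · have := hb x hx; omega
    · refine ⟨List.Pairwise.map _ (fun a b hab => by omega) hs, by simp [hlen], ?_⟩
      intro x hx
      rcases List.mem_map.mp hx with ⟨y, hy, rfl⟩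
      have := hb y hy
      omega

lemma Sset_rec (n k l : ℕ) :
    Sset (n+1) (k+1) (l+1) =
      (fun t => 1 :: t) '' Sset n (k+2) (l+1) ∪ (List.map (· + 1)) '' Sset (n+1) k l := by
  ext a
  simp only [Set.mem_union, Set.mem_image]
  constructor
  · rintro ⟨hs, hlen, hb, i, hi, hcond⟩
    rcases a with _ | ⟨h, t⟩
    · simp at hlen
    · have hs' := List.pairwise_cons.mp hs
      have hlen' : t.length = n := by simpa using hlen
      by_cases hh : h = 1
      · left
        refine ⟨t, ⟨hs'.2, hlen', fun x hx => hb x (by simp [hx]), ?_⟩, by rw [hh]⟩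
        rcases i with _ | j
        · exfalso
          rw [show (h :: t).get ⟨0, hi⟩ = h from rfl] at hcond
          omega
        · have hj : j < t.length := by simpa using hi
          refine ⟨j, hj, ?_⟩
          rw [show (h :: t).get ⟨j+1, hi⟩ = t.get ⟨j, hj⟩ from rfl] at hcond
          omega
      · right
        have h2 : ∀ x ∈ h :: t, 2 ≤ x := by
          intro x hx
          rcases List.mem_cons.mp hx with rfl | hx
          · have := (hb x (by simp)).1; omega
          · have := hs'.1 x hx
            have := (hb h (by simp)).1
            omega
        have hmapeq : ((h :: t).map (· - 1)).map (· + 1) = h :: t := by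
          rw [List.map_map]
          have he : ∀ x ∈ (h :: t), ((· + 1) ∘ (· - 1)) x = id x := by
            intro x hx
            have := h2 x hx
            simp
            omega
          rw [List.map_congr_left he, List.map_id]
        refine ⟨(h :: t).map (· - 1), ⟨?_, ?_, ?_, ?_⟩, hmapeq⟩
        · exact List.Pairwise.map _ (fun a b hab => Nat.sub_le_sub_right hab 1) hs
        · simpa using hlen
        · intro x hx
          rcases List.mem_map.mp hx with ⟨y, hy, rfl⟩
          have := h2 y hy
          have := (hb y hy).2
          omega
        · have hi' : i < ((h :: t).map (· - 1)).length := by simpa using hi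
          refine ⟨i, hi', ?_⟩
          have hg : ((h :: t).map (· - 1)).get ⟨i, hi'⟩ = (h :: t).get ⟨i, hi⟩ - 1 := by
            simp only [List.get_eq_getElem, List.getElem_map]
          rw [hg]
          have := h2 _ ((h :: t).get_mem ⟨i, hi⟩)
          omega
  · rintro (⟨t, ⟨hs, hlen, hb, i, hi, hcond⟩, rfl⟩ | ⟨b, ⟨hs, hlen, hb, i, hi, hcond⟩, rfl⟩)
    · refine ⟨List.pairwise_cons.mpr ⟨fun x hx => (hb x hx).1, hs⟩, by simp [hlen], ?_, ?_⟩
      · intro x hx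
        rcases List.mem_cons.mp hx with rfl | hx
        · omega
        · have := hb x hx; omega
      · refine ⟨i + 1, by simp; omega, ?_⟩
        rw [show (1 :: t).get ⟨i+1, by simp; omega⟩ = t.get ⟨i, hi⟩ from rfl]
        omega
    · refine ⟨List.Pairwise.map _ (fun a b hab => by omega) hs, by simp [hlen], ?_, ?_⟩
      · intro x hx
        rcases List.mem_map.mp hx with ⟨y, hy, rfl⟩
        have := hb y hy
        omega
      · have hi' : i < (b.map (· + 1)).length := by simpa using hi
        refine ⟨i, hi', ?_⟩
        have hg : (b.map (· + 1)).get ⟨i, hi'⟩ = b.get ⟨i, hi⟩ + 1 := by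
          simp only [List.get_eq_getElem, List.getElem_map]
        rw [hg]
        omega

lemma succ_inj' : Function.Injective (fun x : ℕ => x + 1) := fun a b h => Nat.add_right_cancel h

lemma disj_helper (A B : Set (List ℕ)) (hB : ∀ b ∈ B, ∀ x ∈ b, 1 ≤ x) :
    Disjoint ((fun t => 1 :: t) '' A) (List.map (· + 1) '' B) := by
  rw [Set.disjoint_left]
  rintro x ⟨t, _, rfl⟩ ⟨b, hbB, hbeq⟩
  rcases b with _ | ⟨hb, tb⟩
  · simp at hbeq
  · simp only [List.map_cons, List.cons.injEq] at hbeq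
    have := hB _ hbB hb (by simp)
    omega

lemma Tset_card (n l : ℕ) : (Tset n l).ncard = (n + l - 1).choose n := by
  induction n generalizing l with
  | zero =>
    rw [Tset_zero]
    simp
  | succ n ihn =>
    induction l with
    | zero =>
      rw [Tset_l0 (n+1) (by omega)]
      simp [Nat.choose_eq_zero_of_lt]
    | succ l ihl =>
      rw [Tset_rec n l]
      rw [Set.ncard_union_eq
        (disj_helper _ _ (fun b hb x hx => (hb.2.2 x hx).1))
        ((Tset_finite n (l+1)).image _) ((Tset_finite (n+1) l).image _)]
      rw [Set.ncard_image_of_injective _ (List.cons_injective),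
        Set.ncard_image_of_injective _ (List.map_injective_iff.mpr succ_inj'),
        ihn (l+1), ihl]
      have e1 : n + 1 + (l + 1) - 1 = (n + l) + 1 := by omega
      have e2 : n + (l + 1) - 1 = n + l := by omega
      have e3 : n + 1 + l - 1 = n + l := by omega
      rw [e1, e2, e3, Nat.choose_succ_succ]

lemma Sset_k0_card (n l : ℕ) :
    (Sset (n+1) 0 l).ncard = chooseInt (n + 1 + l - 1) ((l : ℤ) - 1) := by
  rcases l with _ | l
  · rw [Sset_l0]
    simp [chooseInt]
  · rw [Sset_k0 (n+1) (l+1) (by omega), Tset_card]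
    unfold chooseInt
    rw [if_pos (by push_cast; omega)]
    have e1 : (((l + 1 : ℕ) : ℤ) - 1).toNat = l := by push_cast; omega
    rw [e1]
    have e2 : n + 1 + (l + 1) - 1 = n + l + 1 := by omega
    rw [e2]
    rw [← Nat.choose_symm (by omega : l ≤ n + l + 1)]
    congr 1
    omega

lemma Sset_card_aux (N : ℕ) : ∀ n k l, n + l ≤ N → 1 ≤ k → l ≤ n + k →
    (Sset n k l).ncard = chooseInt (n + l - 1) ((l : ℤ) - k - 1) := by
  induction N with
  | zero =>
    intro n k l hN hk hl
    obtain rfl : n = 0 := by omega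
    obtain rfl : l = 0 := by omega
    rw [Sset_zero, Set.ncard_empty]
    unfold chooseInt
    rw [if_neg (by push_cast; omega)]
  | succ N ih =>
    intro n k l hN hk hl
    rcases n with _ | n
    · rw [Sset_zero]
      simp only [Set.ncard_empty]
      rw [chooseInt, if_neg (by omega)]
    · rcases l with _ | l
      · rw [Sset_l0]
        simp only [Set.ncard_empty]
        rw [chooseInt, if_neg (by omega)]
      · obtain ⟨k', rfl⟩ : ∃ k', k = k' + 1 := ⟨k - 1, by omega⟩
        rw [Sset_rec n k' l]
        rw [Set.ncard_union_eq
          (disj_helper _ _ (fun b hb x hx => (hb.2.2.1 x hx).1))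
          ((Sset_finite n (k'+2) (l+1)).image _) ((Sset_finite (n+1) k' l).image _)]
        rw [Set.ncard_image_of_injective _ (List.cons_injective),
          Set.ncard_image_of_injective _ (List.map_injective_iff.mpr succ_inj')]
        have hterm1 : (Sset n (k'+2) (l+1)).ncard
            = chooseInt (n + l) ((l : ℤ) - k' - 2) := by
          rw [ih n (k'+2) (l+1) (by omega) (by omega) (by omega)]
          have e : n + (l+1) - 1 = n + l := by omega
          rw [e]
          congr 1
          omega
        have hterm2 : (Sset (n+1) k' l).ncard
            = chooseInt (n + l) ((l : ℤ) - k' - 1) := by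
          rcases Nat.eq_zero_or_pos k' with rfl | hk'
          · rw [Sset_k0_card n l]
            have e : n + 1 + l - 1 = n + l := by omega
            rw [e]
            congr 1 <;> omega
          · rw [ih (n+1) k' l (by omega) (by omega) (by omega)]
            have e : n + 1 + l - 1 = n + l := by omega
            rw [e]
        rw [hterm1, hterm2]
        have e : n + 1 + (l + 1) - 1 = (n + l) + 1 := by omega
        rw [e, chooseInt_succ]
        have c1 : ((l+1 : ℕ) : ℤ) - ((k'+1 : ℕ) : ℤ) - 1 - 1 = (l:ℤ) - k' - 2 := by
          push_cast; ring
        have c2 : ((l+1 : ℕ) : ℤ) - ((k'+1 : ℕ) : ℤ) - 1 = (l:ℤ) - k' - 1 := by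
          push_cast; ring
        rw [c1, c2]

lemma Sset_card (n k l : ℕ) (hk : 1 ≤ k) (hl : l ≤ n + k) :
    (Sset n k l).ncard = chooseInt (n + l - 1) ((l : ℤ) - k - 1) :=
  Sset_card_aux (n + l) n k l le_rfl hk hl


theorem stmt5 (n k l : ℕ) (hl : k + 1 ≤ l) (hn : l ≤ n) :
    opGeLe n k l = Nat.choose (n + l - 1) (l - k - 1) := by
  unfold opGeLe
  rcases Nat.eq_zero_or_pos k with rfl | hk
  · have hset : {a : List ℕ | IsOrderedPrefSet n a ∧ 0 ≤ flaws n a ∧ ∀ x ∈ a, x ≤ l}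
        = Tset n l := by
      ext a
      simp only [Set.mem_setOf_eq, Tset, IsOrderedPrefSet, IsPrefSet]
      constructor
      · rintro ⟨⟨⟨hlen, hb⟩, hs⟩, _, hle⟩
        exact ⟨hs, hlen, fun x hx => ⟨(hb x hx).1, hle x hx⟩⟩
      · rintro ⟨hs, hlen, hb⟩
        exact ⟨⟨⟨hlen, fun x hx => ⟨(hb x hx).1, le_trans (hb x hx).2 hn⟩⟩, hs⟩,
          by omega, fun x hx => (hb x hx).2⟩
    rw [hset, Tset_card, ← Nat.choose_symm (show n ≤ n + l - 1 by omega)]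
    congr 1
    omega
  · have hset : {a : List ℕ | IsOrderedPrefSet n a ∧ k ≤ flaws n a ∧ ∀ x ∈ a, x ≤ l}
        = Sset n k l := by
      ext a
      simp only [Set.mem_setOf_eq, Sset, IsOrderedPrefSet, IsPrefSet]
      constructor
      · rintro ⟨⟨⟨hlen, hb⟩, hs⟩, hf, hle⟩
        exact ⟨hs, hlen, fun x hx => ⟨(hb x hx).1, hle x hx⟩,
          (flaws_ge_iff n k hk a hs hlen hb).mp hf⟩
      · rintro ⟨hs, hlen, hb, hex⟩
        have hb' : ∀ x ∈ a, 1 ≤ x ∧ x ≤ n :=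
          fun x hx => ⟨(hb x hx).1, le_trans (hb x hx).2 hn⟩
        exact ⟨⟨⟨hlen, hb'⟩, hs⟩, (flaws_ge_iff n k hk a hs hlen hb').mpr hex,
          fun x hx => (hb x hx).2⟩
    rw [hset, Sset_card n k l hk (by omega)]
    unfold chooseInt
    rw [if_pos (by omega)]
    congr 1
    omega
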